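/- Let Q be a symmetric n×n real matrix, d ∈ ℝⁿ, A ∈ ℝ^{m×n}, b ∈ ℝᵐ. A point x̄ ∈ ℝⁿ is a locally unique solution of the QP (i.e. x̄ ∈ F and there exists ε > 0 such that Φ(x̄) < Φ(x) for all x ∈ F with ‖x − x̄‖ < ε and x ≠ x̄) if and only if x̄ ∈ F and there exists λ̄ ∈ ℝᵐ with λ̄ ≥ 0, Qx̄ + d = −Aᵀλ̄, (Ax̄ − b)ᵀλ̄ = 0, and pᵀQp > 0 for every nonzero p ∈ ℝⁿ satisfying a_iᵀp = 0 for all i with λ̄_i > 0 and a_iᵀp ≤ 0 for all i ∈ I_{x̄}. -/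

import Mathlib

open Matrix Filter Finset

/-- The objective `Φ(x) = xᵀQx + 2dᵀx`. -/
noncomputable def Phi {n : ℕ} (Q : Matrix (Fin n) (Fin n) ℝ) (d : Fin n → ℝ)
    (x : Fin n → ℝ) : ℝ :=
  x ⬝ᵥ (Q *ᵥ x) + 2 * (d ⬝ᵥ x)

section Aux

variable {ι : Type*} [Fintype ι] {V : Type*} [NormedAddCommGroup V]
  [InnerProductSpace ℝ V] [FiniteDimensional ℝ V]

lemma sum_extend [DecidableEq ι] (s : Finset ι) (g : {x // x ∈ s} → ℝ) (v : ι → V) :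
    (∑ i, (if h : i ∈ s then g ⟨i, h⟩ else 0) • v i) = ∑ i : s, g i • v i := by
  rw [← Finset.sum_subset s.subset_univ (fun i _ hi => by rw [dif_neg hi, zero_smul]),
    ← Finset.sum_attach s fun i => (if h : i ∈ s then g ⟨i, h⟩ else 0) • v i]
  exact Finset.sum_congr rfl fun i _ => by rw [dif_pos i.2]

/-- conic Carathéodory -/
lemma cara (v : ι → V) : ∀ (s : Finset ι) (μ : ι → ℝ), 0 ≤ μ → (∀ i ∉ s, μ i = 0) →
    ∃ (s' : Finset ι) (μ' : ι → ℝ), 0 ≤ μ' ∧ (∀ i ∉ s', μ' i = 0) ∧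
      (∑ i, μ' i • v i) = ∑ i, μ i • v i ∧ LinearIndependent ℝ (fun i : s' => v i) := by
  classical
  intro s
  induction s using Finset.strongInductionOn with
  | _ s IH =>
  intro μ hμ hsupp
  by_cases hli : LinearIndependent ℝ (fun i : s => v i)
  · exact ⟨s, μ, hμ, hsupp, rfl, hli⟩
  · obtain ⟨g0, hg0, i₁, hi₁⟩ := Fintype.not_linearIndependent_iff.mp hli
    obtain ⟨g, hgpos, hgsum, hgsupp⟩ :
        ∃ g : ι → ℝ, (∃ i, 0 < g i) ∧ (∑ i, g i • v i) = 0 ∧ ∀ i ∉ s, g i = 0 := by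
      rcases hi₁.lt_or_gt with hlt | hlt
      · refine ⟨fun i => if h : i ∈ s then -g0 ⟨i, h⟩ else 0, ⟨i₁, ?_⟩, ?_, fun i hi => dif_neg hi⟩
        · show 0 < if h : (i₁ : ι) ∈ s then -g0 ⟨i₁, h⟩ else 0
          rw [dif_pos i₁.2, Subtype.coe_eta]; linarith
        · rw [sum_extend s (fun i => -g0 i) v]
          simp only [neg_smul, Finset.sum_neg_distrib, neg_eq_zero]; exact hg0
      · refine ⟨fun i => if h : i ∈ s then g0 ⟨i, h⟩ else 0, ⟨i₁, ?_⟩, ?_, fun i hi => dif_neg hi⟩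
        · show 0 < if h : (i₁ : ι) ∈ s then g0 ⟨i₁, h⟩ else 0
          rw [dif_pos i₁.2, Subtype.coe_eta]; exact hlt
        · rw [sum_extend s g0 v]; exact hg0
    obtain ⟨ipos, hipos⟩ := hgpos
    have hFne : (s.filter fun i => 0 < g i).Nonempty := by
      refine ⟨ipos, Finset.mem_filter.mpr ⟨?_, hipos⟩⟩
      by_contra h
      rw [hgsupp ipos h] at hipos; exact lt_irrefl _ hipos
    obtain ⟨i₀, hi₀mem, hi₀min⟩ := Finset.exists_min_image _ (fun i => μ i / g i) hFne
    have hgi₀ : 0 < g i₀ := (Finset.mem_filter.mp hi₀mem).2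
    set t := μ i₀ / g i₀ with ht
    have htnn : 0 ≤ t := div_nonneg (hμ i₀) hgi₀.le
    set μ' : ι → ℝ := fun i => μ i - t * g i with hμ'
    have hμ'nn : 0 ≤ μ' := by
      intro i
      simp only [hμ', Pi.zero_apply, sub_nonneg]
      rcases le_or_gt (g i) 0 with h | h
      · exact le_trans (mul_nonpos_of_nonneg_of_nonpos htnn h) (hμ i)
      · have his : i ∈ s := by
          by_contra hc; rw [hgsupp i hc] at h; exact lt_irrefl _ h
        have h2 := hi₀min i (Finset.mem_filter.mpr ⟨his, h⟩)
        calc t * g i ≤ (μ i / g i) * g i := mul_le_mul_of_nonneg_right h2 h.le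
          _ = μ i := div_mul_cancel₀ _ h.ne'
    have hμ'supp : ∀ i ∉ s.erase i₀, μ' i = 0 := by
      intro i hi
      rcases Finset.mem_erase.not.mp hi with h
      push_neg at h
      by_cases hii : i = i₀
      · subst hii
        show μ i - t * g i = 0
        rw [ht, div_mul_cancel₀ _ hgi₀.ne', sub_self]
      · have his : i ∉ s := h hii
        simp [hμ', hsupp i his, hgsupp i his]
    have hsum : (∑ i, μ' i • v i) = ∑ i, μ i • v i := by
      simp only [hμ', sub_smul, mul_smul, Finset.sum_sub_distrib, ← Finset.smul_sum,
        hgsum, smul_zero, sub_zero]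
    obtain ⟨s'', μ'', h1, h2, h3, h4⟩ :=
      IH (s.erase i₀) (Finset.erase_ssubset (Finset.mem_filter.mp hi₀mem).1) μ' hμ'nn hμ'supp
    exact ⟨s'', μ'', h1, h2, h3.trans hsum, h4⟩


/-- the linear map sending coefficients to combinations -/
noncomputable def comboMap (v : ι → V) : (ι → ℝ) →ₗ[ℝ] V where
  toFun μ := ∑ i, μ i • v i
  map_add' a b := by simp [add_smul, Finset.sum_add_distrib]
  map_smul' c a := by simp [mul_smul, Finset.smul_sum]

lemma isClosed_cone (v : ι → V) : IsClosed {x : V | ∃ μ : ι → ℝ, 0 ≤ μ ∧ x = ∑ i, μ i • v i} := by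
  classical
  have key : {x : V | ∃ μ : ι → ℝ, 0 ≤ μ ∧ x = ∑ i, μ i • v i} =
      ⋃ s ∈ {s : Finset ι | LinearIndependent ℝ (fun i : s => v i)},
        (comboMap (fun i : s => v (i : ι))) '' {μ | 0 ≤ μ} := by
    ext x
    simp only [Set.mem_iUnion, Set.mem_image, Set.mem_setOf_eq]
    constructor
    · rintro ⟨μ, hμ, rfl⟩
      obtain ⟨s', μ', h1, h2, h3, h4⟩ := cara v Finset.univ μ hμ (by simp)
      refine ⟨s', h4, fun i => μ' i, fun i => h1 _, ?_⟩
      show (∑ i : s', μ' (i:ι) • v (i:ι)) = _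
      rw [Finset.sum_coe_sort s' (fun i => μ' i • v i), ← h3]
      exact (Finset.sum_subset (f := fun i => μ' i • v i) s'.subset_univ (fun i _ hi => by simp [h2 i hi]))
    · rintro ⟨s, hs, μ, hμ, rfl⟩
      refine ⟨fun i => if h : i ∈ s then μ ⟨i, h⟩ else 0, fun i => ?_, ?_⟩
      · by_cases h : i ∈ s
        · simpa [h] using hμ ⟨i, h⟩
        · simp [h]
      · exact (sum_extend s μ v).symm
  rw [key]
  apply Set.Finite.isClosed_biUnion (Set.toFinite _)
  intro s hs
  have hinj : Function.Injective (comboMap (fun i : s => v (i : ι))) := by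
    rw [← LinearMap.ker_eq_bot, LinearMap.ker_eq_bot']
    intro μ hμ
    have := Fintype.linearIndependent_iff.mp hs μ hμ
    funext i; exact this i
  have hce := LinearMap.isClosedEmbedding_of_injective (LinearMap.ker_eq_bot.mpr hinj)
  refine hce.isClosedMap _ ?_
  have : {μ : {x // x ∈ s} → ℝ | 0 ≤ μ} = ⋂ i, {μ : {x // x ∈ s} → ℝ | 0 ≤ μ i} := by
    ext μ; simp [Pi.le_def]
  rw [this]
  exact isClosed_iInter fun i => isClosed_le continuous_const (continuous_apply i)

open scoped InnerProductSpace in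
theorem farkas_inner (v : ι → V) (c : V) (h : ∀ p : V, (∀ i, ⟪v i, p⟫_ℝ ≤ 0) → ⟪c, p⟫_ℝ ≤ 0) :
    ∃ μ : ι → ℝ, 0 ≤ μ ∧ c = ∑ i, μ i • v i := by
  classical
  haveI : CompleteSpace V := FiniteDimensional.complete ℝ V
  set K : ConvexCone ℝ V :=
    { carrier := {x : V | ∃ μ : ι → ℝ, 0 ≤ μ ∧ x = ∑ i, μ i • v i}
      smul_mem' := by
        rintro t ht x ⟨μ, hμ, rfl⟩
        exact ⟨t • μ, fun i => mul_nonneg ht.le (hμ i), by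
          simp [Finset.smul_sum, mul_smul]⟩
      add_mem' := by
        rintro x ⟨μ, hμ, rfl⟩ y ⟨ν, hν, rfl⟩
        exact ⟨μ + ν, fun i => add_nonneg (hμ i) (hν i), by
          simp [add_smul, Finset.sum_add_distrib]⟩ } with hK
  by_contra hc
  push_neg at hc
  have hcK : c ∉ K := by
    rintro ⟨μ, hμ, rfl⟩
    exact (hc μ hμ) rfl
  have hne : (K : Set V).Nonempty := ⟨0, 0, le_refl _, by simp⟩
  have hcl : IsClosed (K : Set V) := isClosed_cone v
  obtain ⟨y, hy, hyc⟩ := ProperCone.hyperplane_separation' (x₀ := c)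
    (⟨K.toPointedCone (by exact ⟨0, le_refl _, by simp⟩), hcl⟩ : ProperCone ℝ V) hcK
  have hvK : ∀ i, v i ∈ K := by
    intro i
    refine ⟨fun j => if j = i then 1 else 0, fun j => by positivity, ?_⟩
    simp [ite_smul, Finset.sum_ite_eq']
  have h1 := h (-y) fun i => by
    rw [inner_neg_right, neg_nonpos]
    exact hy _ (hvK i)
  rw [inner_neg_right, neg_nonpos, real_inner_comm] at h1
  exact absurd h1 (not_le.mpr (by rwa [real_inner_comm] at hyc))

theorem farkas_dot {n : ℕ} (v : ι → (Fin n → ℝ)) (c : Fin n → ℝ)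
    (h : ∀ p : Fin n → ℝ, (∀ i, v i ⬝ᵥ p ≤ 0) → c ⬝ᵥ p ≤ 0) :
    ∃ μ : ι → ℝ, 0 ≤ μ ∧ ∀ j, c j = ∑ i, μ i * v i j := by
  set V := EuclideanSpace ℝ (Fin n)
  have hinner : ∀ a b : V, (inner ℝ a b : ℝ) = a.ofLp ⬝ᵥ b.ofLp := by
    intro a b
    rw [EuclideanSpace.inner_eq_star_dotProduct]; simp [dotProduct, mul_comm]
  obtain ⟨μ, hμ, hsum⟩ := farkas_inner (V := V) (fun i => WithLp.toLp 2 (v i)) (WithLp.toLp 2 c) (by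
    intro p hp
    rw [hinner]
    exact h p.ofLp fun i => by have := hp i; rw [hinner] at this; exact this)
  refine ⟨μ, hμ, fun j => ?_⟩
  have h2 : c = ∑ i, μ i • v i := by
    have := congrArg WithLp.ofLp hsum
    exact this.trans ((WithLp.ofLp_sum _ _ _ _).trans (Finset.sum_congr rfl fun i _ => rfl))
  rw [h2]
  simp [Finset.sum_apply]

end Aux

section Main

variable {n m : ℕ} (Q : Matrix (Fin n) (Fin n) ℝ) (d : Fin n → ℝ)

lemma dot_sym (hQ : Q.IsSymm) (a c : Fin n → ℝ) : a ⬝ᵥ (Q *ᵥ c) = c ⬝ᵥ (Q *ᵥ a) := by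
  rw [Matrix.dotProduct_mulVec, ← Matrix.mulVec_transpose, show Qᵀ = Q from hQ,
    dotProduct_comm]

lemma phi_expand (hQ : Q.IsSymm) (x p : Fin n → ℝ) (t : ℝ) :
    Phi Q d (x + t • p) = Phi Q d x + 2*t*(p ⬝ᵥ (Q *ᵥ x + d)) + t^2 * (p ⬝ᵥ (Q *ᵥ p)) := by
  have hsym := dot_sym Q hQ x p
  have hdc := dotProduct_comm d p
  simp only [Phi, Matrix.mulVec_add, Matrix.mulVec_smul, dotProduct_add,
    add_dotProduct, dotProduct_smul, smul_dotProduct, smul_eq_mul]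
  rw [hsym, hdc]
  ring

lemma mulVec_apply_cont (A : Matrix (Fin m) (Fin n) ℝ) (i : Fin m) :
    Continuous fun p : Fin n → ℝ => (A *ᵥ p) i := by
  show Continuous fun p : Fin n → ℝ => ∑ k, A i k * p k
  exact continuous_finset_sum _ fun k _ => continuous_const.mul (continuous_apply k)

lemma eventually_feasible (A : Matrix (Fin m) (Fin n) ℝ) (b : Fin m → ℝ) {xbar : Fin n → ℝ}
    (hfeas : A *ᵥ xbar ≤ b) (p : Fin n → ℝ)
    (hp : ∀ i, (A *ᵥ xbar) i = b i → (A *ᵥ p) i ≤ 0) :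
    ∀ᶠ t in nhdsWithin (0:ℝ) (Set.Ioi 0), A *ᵥ (xbar + t • p) ≤ b := by
  have key : ∀ᶠ t in nhdsWithin (0:ℝ) (Set.Ioi 0), ∀ i, (A *ᵥ (xbar + t • p)) i ≤ b i := by
    refine Filter.eventually_all.mpr fun i => ?_
    have hx : ∀ t : ℝ, (A *ᵥ (xbar + t • p)) i = (A *ᵥ xbar) i + t * (A *ᵥ p) i := by
      intro t
      simp [Matrix.mulVec_add, Matrix.mulVec_smul]
    rcases lt_or_eq_of_le (hfeas i) with hlt | heq
    · have htend : Tendsto (fun t : ℝ => (A *ᵥ xbar) i + t * (A *ᵥ p) i)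
          (nhdsWithin (0:ℝ) (Set.Ioi 0)) (nhds ((A *ᵥ xbar) i)) := by
        have h0 : Tendsto (fun t : ℝ => (A *ᵥ xbar) i + t * (A *ᵥ p) i)
            (nhds 0) (nhds ((A *ᵥ xbar) i + 0 * (A *ᵥ p) i)) :=
          (continuous_const.add (continuous_id.mul continuous_const)).tendsto 0
        rw [zero_mul, add_zero] at h0
        exact h0.mono_left nhdsWithin_le_nhds
      filter_upwards [htend.eventually_lt_const hlt] with t ht
      rw [hx]; exact ht.le
    · filter_upwards [self_mem_nhdsWithin] with t ht
      rw [hx, ← heq]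
      have h1 : t * (A *ᵥ p) i ≤ 0 :=
        mul_nonpos_of_nonneg_of_nonpos (le_of_lt ht) (hp i heq)
      linarith
  exact key.mono fun t ht i => ht i

lemma g_form {xbar : Fin n → ℝ} {A : Matrix (Fin m) (Fin n) ℝ} {lam : Fin m → ℝ}
    (hgrad : Q *ᵥ xbar + d = -(Aᵀ *ᵥ lam)) (p : Fin n → ℝ) :
    p ⬝ᵥ (Q *ᵥ xbar + d) = -∑ i, (A *ᵥ p) i * lam i := by
  rw [hgrad, dotProduct_neg, Matrix.dotProduct_mulVec, Matrix.vecMul_transpose]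
  rfl

end Main

/-- second-order characterization of locally unique solutions.
`x̄` is a locally unique solution of the QP iff `x̄` is feasible, satisfies the KKT
conditions with some multiplier `λ̄ ≥ 0`, and `pᵀQp > 0` for every nonzero `p` in
the cone `{p : a_iᵀp = 0 ∀ i ∈ J_λ̄, a_iᵀp ≤ 0 ∀ i ∈ I_x̄}`. -/
theorem locally_unique_iff_second_order {n m : ℕ}
    (Q : Matrix (Fin n) (Fin n) ℝ) (hQ : Q.IsSymm)
    (d : Fin n → ℝ) (A : Matrix (Fin m) (Fin n) ℝ) (b : Fin m → ℝ)
    (xbar : Fin n → ℝ) :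
    (A *ᵥ xbar ≤ b ∧ ∃ ε : ℝ, 0 < ε ∧ ∀ x : Fin n → ℝ, A *ᵥ x ≤ b →
        ‖x - xbar‖ < ε → x ≠ xbar → Phi Q d xbar < Phi Q d x) ↔
      (A *ᵥ xbar ≤ b ∧ ∃ lam : Fin m → ℝ, 0 ≤ lam ∧
        Q *ᵥ xbar + d = -(Aᵀ *ᵥ lam) ∧ (A *ᵥ xbar - b) ⬝ᵥ lam = 0 ∧
        ∀ p : Fin n → ℝ, p ≠ 0 → (∀ i : Fin m, 0 < lam i → (A *ᵥ p) i = 0) →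
          (∀ i : Fin m, (A *ᵥ xbar) i = b i → (A *ᵥ p) i ≤ 0) →
          0 < p ⬝ᵥ (Q *ᵥ p)) := by
  classical
  constructor
  · -- necessity
    rintro ⟨hfeas, ε, hε, hmin⟩
    refine ⟨hfeas, ?_⟩
    -- key small-t positivity
    have key1 : ∀ p : Fin n → ℝ, p ≠ 0 → (∀ i, (A *ᵥ xbar) i = b i → (A *ᵥ p) i ≤ 0) →
        ∀ᶠ t in nhdsWithin (0:ℝ) (Set.Ioi 0),
          0 < 2*t*(p ⬝ᵥ (Q *ᵥ xbar + d)) + t^2 * (p ⬝ᵥ (Q *ᵥ p)) := by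
      intro p hp0 hpI
      have hfe := eventually_feasible A b hfeas p hpI
      have hsmall : ∀ᶠ t in nhdsWithin (0:ℝ) (Set.Ioi 0), t * ‖p‖ < ε := by
        have h0 : Tendsto (fun t : ℝ => t * ‖p‖) (nhds 0) (nhds (0 * ‖p‖)) :=
          (continuous_id.mul continuous_const).tendsto 0
        rw [zero_mul] at h0
        exact (h0.mono_left nhdsWithin_le_nhds).eventually_lt_const hε
      filter_upwards [hfe, hsmall, self_mem_nhdsWithin] with t h1 h2 (h3 : 0 < t)
      have hne : xbar + t • p ≠ xbar := by
        intro hcon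
        have : t • p = 0 := by
          have := congrArg (fun z => z - xbar) hcon
          simpa using this
        exact hp0 (by simpa [h3.ne'] using (smul_eq_zero.mp this))
      have hnorm : ‖(xbar + t • p) - xbar‖ < ε := by
        rw [add_sub_cancel_left, norm_smul, Real.norm_eq_abs, abs_of_pos h3]
        exact h2
      have := hmin _ h1 hnorm hne
      rw [phi_expand Q d hQ xbar p t] at this
      linarith
    -- first-order condition via Farkas
    have hfirst : ∀ p : Fin n → ℝ, (∀ i : {i : Fin m // (A *ᵥ xbar) i = b i},
        (A (i:Fin m)) ⬝ᵥ p ≤ 0) → (-(Q *ᵥ xbar + d)) ⬝ᵥ p ≤ 0 := by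
      intro p hp
      have hpI : ∀ i, (A *ᵥ xbar) i = b i → (A *ᵥ p) i ≤ 0 := fun i hi => hp ⟨i, hi⟩
      rcases eq_or_ne p 0 with rfl | hp0
      · simp
      · rw [neg_dotProduct, neg_nonpos, dotProduct_comm]
        set g := p ⬝ᵥ (Q *ᵥ xbar + d)
        set f := p ⬝ᵥ (Q *ᵥ p)
        have hev : ∀ᶠ t in nhdsWithin (0:ℝ) (Set.Ioi 0), 0 ≤ 2*g + t*f := by
          filter_upwards [key1 p hp0 hpI, self_mem_nhdsWithin] with t h1 (h2 : 0 < t)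
          nlinarith
        have htend : Tendsto (fun t : ℝ => 2*g + t*f)
            (nhdsWithin (0:ℝ) (Set.Ioi 0)) (nhds (2*g)) := by
          have h0 : Tendsto (fun t : ℝ => 2*g + t*f) (nhds 0) (nhds (2*g + 0*f)) :=
            (continuous_const.add (continuous_id.mul continuous_const)).tendsto 0
          rw [zero_mul, add_zero] at h0
          exact h0.mono_left nhdsWithin_le_nhds
        have : 0 ≤ 2*g := ge_of_tendsto htend hev
        linarith
    obtain ⟨μ, hμ0, hμ⟩ := farkas_dot (fun i : {i : Fin m // (A *ᵥ xbar) i = b i} => A (i:Fin m))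
      (-(Q *ᵥ xbar + d)) hfirst
    set lam : Fin m → ℝ := fun i => if h : (A *ᵥ xbar) i = b i then μ ⟨i, h⟩ else 0 with hlam
    have hlam0 : (0:Fin m → ℝ) ≤ lam := by
      intro i
      by_cases h : (A *ᵥ xbar) i = b i
      · simpa [hlam, h] using hμ0 ⟨i, h⟩
      · simp [hlam, h]
    have hgrad : Q *ᵥ xbar + d = -(Aᵀ *ᵥ lam) := by
      funext j
      have h1 := hμ j
      have h2 : (Aᵀ *ᵥ lam) j = ∑ i, lam i * A i j := by
        simp [Matrix.mulVec, dotProduct, Matrix.transpose_apply, mul_comm]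
      have h3 : ∑ i, lam i * A i j
          = ∑ i : {i : Fin m // (A *ᵥ xbar) i = b i}, lam (i:Fin m) * A (i:Fin m) j := by
        rw [← Finset.sum_subtype (Finset.univ.filter fun i => (A *ᵥ xbar) i = b i)
          (fun i => by simp) (fun i => lam i * A i j)]
        exact (Finset.sum_subset (Finset.filter_subset _ _) (fun i _ hi => by
          have : ¬ (A *ᵥ xbar) i = b i := by simpa using hi
          simp [hlam, this])).symm
      have h4 : ∀ i : {i : Fin m // (A *ᵥ xbar) i = b i}, lam (i:Fin m) = μ i := by
        intro i; simp [hlam, i.2]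
      simp only [Pi.neg_apply, h2, h3]
      rw [show (∑ i : {i : Fin m // (A *ᵥ xbar) i = b i}, lam (i:Fin m) * A (i:Fin m) j)
          = ∑ i : {i : Fin m // (A *ᵥ xbar) i = b i}, μ i * A (i:Fin m) j from
        Finset.sum_congr rfl fun i _ => by rw [h4 i]]
      have := congrArg Neg.neg h1
      simpa using this
    refine ⟨lam, hlam0, hgrad, ?_, ?_⟩
    · -- complementarity
      apply Finset.sum_eq_zero
      intro i _
      by_cases h : (A *ᵥ xbar) i = b i
      · simp [Pi.sub_apply, h]
      · simp [hlam, h]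
    · -- second-order
      intro p hp0 hJ hI
      have hg0 : p ⬝ᵥ (Q *ᵥ xbar + d) = 0 := by
        rw [g_form Q d hgrad p, neg_eq_zero]
        apply Finset.sum_eq_zero
        intro i _
        rcases (show (0:ℝ) ≤ lam i from hlam0 i).lt_or_eq with h | h
        · rw [hJ i h, zero_mul]
        · rw [← h, mul_zero]
      obtain ⟨t, h1, (h2 : 0 < t)⟩ := ((key1 p hp0 hI).and self_mem_nhdsWithin).exists
      rw [hg0] at h1
      nlinarith
  · -- sufficiency
    rintro ⟨hfeas, lam, hlam0, hgrad, hcompl, hpos⟩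
    refine ⟨hfeas, ?_⟩
    set f : (Fin n → ℝ) → ℝ := fun p => p ⬝ᵥ (Q *ᵥ p) with hf
    set g : (Fin n → ℝ) → ℝ := fun p => p ⬝ᵥ (Q *ᵥ xbar + d) with hg
    have hfc : Continuous f := by
      apply continuous_finset_sum
      intro j _
      exact (continuous_apply j).mul (mulVec_apply_cont Q j)
    have hgc : Continuous g := by
      apply continuous_finset_sum
      intro j _
      exact (continuous_apply j).mul continuous_const
    -- pointwise complementarity
    have hcp : ∀ i, 0 < lam i → (A *ᵥ xbar) i = b i := by
      intro i hi
      have hsum0 : ∑ j, (b j - (A *ᵥ xbar) j) * lam j = 0 := by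
        have h1 : (A *ᵥ xbar) ⬝ᵥ lam - b ⬝ᵥ lam = 0 := by
          rw [← sub_dotProduct]; exact hcompl
        have : ∑ j, (b j - (A *ᵥ xbar) j) * lam j = b ⬝ᵥ lam - (A *ᵥ xbar) ⬝ᵥ lam := by
          simp [dotProduct, sub_mul, Finset.sum_sub_distrib]
        rw [this]; linarith
      have hterm := (Finset.sum_eq_zero_iff_of_nonneg (fun j _ =>
        mul_nonneg (sub_nonneg.mpr (hfeas j)) (hlam0 j))).mp hsum0 i (Finset.mem_univ i)
      rcases mul_eq_zero.mp hterm with h | h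
      · linarith [sub_eq_zero.mp h]
      · exact absurd h hi.ne'
    -- g is nonneg on feasible directions
    have hgnn : ∀ p : Fin n → ℝ, (∀ i, (A *ᵥ xbar) i = b i → (A *ᵥ p) i ≤ 0) → 0 ≤ g p := by
      intro p hpD
      show (0:ℝ) ≤ p ⬝ᵥ (Q *ᵥ xbar + d)
      rw [g_form Q d hgrad p, neg_nonneg]
      apply Finset.sum_nonpos
      intro i _
      rcases (show (0:ℝ) ≤ lam i from hlam0 i).lt_or_eq with h | h
      · exact mul_nonpos_of_nonpos_of_nonneg (hpD i (hcp i h)) h.le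
      · rw [← h, mul_zero]
    -- if g p = 0 and p ≠ 0 feasible direction then f p > 0
    have hgzero : ∀ p : Fin n → ℝ, p ≠ 0 → (∀ i, (A *ᵥ xbar) i = b i → (A *ᵥ p) i ≤ 0) →
        g p = 0 → 0 < f p := by
      intro p hp0 hpD hgp
      apply hpos p hp0 _ hpD
      intro i hli
      have hsum0 : ∑ i, (A *ᵥ p) i * lam i = 0 := by
        have h5 : g p = -∑ i, (A *ᵥ p) i * lam i := g_form Q d hgrad p
        rw [hgp] at h5
        linarith [h5]
      have hterm := (Finset.sum_eq_zero_iff_of_nonneg (fun j _ => ?_)).mp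
        (show ∑ j, (-(A *ᵥ p) j) * lam j = 0 by
          simp only [neg_mul, Finset.sum_neg_distrib, hsum0, neg_zero]) i (Finset.mem_univ i)
      · rcases mul_eq_zero.mp hterm with h | h
        · linarith [neg_eq_zero.mp h]
        · exact absurd h hli.ne'
      · rcases (show (0:ℝ) ≤ lam j from hlam0 j).lt_or_eq with h | h
        · exact mul_nonneg (by linarith [hpD j (hcp j h)]) h.le
        · rw [← h, mul_zero]

    -- the feasible-direction set
    set D : Set (Fin n → ℝ) := {p | ∀ i, (A *ᵥ xbar) i = b i → (A *ᵥ p) i ≤ 0} with hD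
    have hDc : IsClosed D := by
      have : D = ⋂ i, {p : Fin n → ℝ | (A *ᵥ xbar) i = b i → (A *ᵥ p) i ≤ 0} := by
        ext p; simp [hD, Set.mem_iInter]
      rw [this]
      refine isClosed_iInter fun i => ?_
      by_cases hA : (A *ᵥ xbar) i = b i
      · have : {p : Fin n → ℝ | (A *ᵥ xbar) i = b i → (A *ᵥ p) i ≤ 0}
            = {p : Fin n → ℝ | (A *ᵥ p) i ≤ 0} := by
          ext p; simp [hA]
        rw [this]
        exact isClosed_le (mulVec_apply_cont A i) continuous_const
      · have : {p : Fin n → ℝ | (A *ᵥ xbar) i = b i → (A *ᵥ p) i ≤ 0} = Set.univ := by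
          ext p; simp [hA]
        rw [this]; exact isClosed_univ
    set S : Set (Fin n → ℝ) := Metric.sphere 0 1 with hS
    have hSmem : ∀ p ∈ S, ‖p‖ = 1 := fun p hp => by
      simpa [hS, mem_sphere_iff_norm] using hp
    set K : Set (Fin n → ℝ) := S ∩ (D ∩ {p | f p ≤ 0}) with hK
    have hKcomp : IsCompact K :=
      (isCompact_sphere 0 1).inter_right (hDc.inter (isClosed_le hfc continuous_const))
    -- key estimate
    have hEst : ∃ ε : ℝ, 0 < ε ∧ ∀ t : ℝ, ∀ p : Fin n → ℝ, 0 < t → t < ε → ‖p‖ = 1 → p ∈ D →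
        0 < 2*t*(g p) + t^2*(f p) := by
      by_cases hKne : K.Nonempty
      · obtain ⟨p₀, hp₀K, hminp⟩ := hKcomp.exists_isMinOn hKne hgc.continuousOn
        have hp₀S : ‖p₀‖ = 1 := hSmem _ hp₀K.1
        have hp₀D : p₀ ∈ D := hp₀K.2.1
        have hp₀f : f p₀ ≤ 0 := hp₀K.2.2
        have hp₀0 : p₀ ≠ 0 := fun h => by rw [h] at hp₀S; simp at hp₀S
        have hδ : 0 < g p₀ := by
          rcases (hgnn p₀ hp₀D).lt_or_eq with h | h
          · exact h
          · exact absurd (hgzero p₀ hp₀0 hp₀D h.symm) (not_lt.mpr hp₀f)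
        obtain ⟨p₁, hp₁S, hmaxp⟩ := (isCompact_sphere (0:Fin n → ℝ) 1).exists_isMaxOn
          ⟨p₀, hp₀K.1⟩ hfc.neg.continuousOn
        set M : ℝ := max (-(f p₁)) 0 with hM
        have hM0 : 0 ≤ M := le_max_right _ _
        refine ⟨g p₀ / (M + 1), div_pos hδ (by linarith), ?_⟩
        intro t p ht htε hpn hpD
        have hgp : g p₀ ≤ g p ∨ 0 < f p := by
          rcases le_or_gt (f p) 0 with h | h
          · exact Or.inl (hminp ⟨mem_sphere_zero_iff_norm.mpr hpn, hpD, h⟩)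
          · exact Or.inr h
        rcases hgp with h | h
        · have hfM : -(f p) ≤ M := le_trans (hmaxp (mem_sphere_zero_iff_norm.mpr hpn))
            (le_max_left _ _)
          have htM : t * (M + 1) < g p₀ := (lt_div_iff₀ (by linarith)).mp htε
          have h1 : t^2 * M < t * g p₀ := by nlinarith
          nlinarith [hgnn p hpD]
        · nlinarith [hgnn p hpD, mul_pos (mul_pos ht ht) h]
      · refine ⟨1, one_pos, ?_⟩
        intro t p ht htε hpn hpD
        have hpfK : f p > 0 := by
          by_contra hcon
          exact hKne ⟨p, mem_sphere_zero_iff_norm.mpr hpn, hpD, not_lt.mp hcon⟩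
        nlinarith [hgnn p hpD, mul_pos (mul_pos ht ht) hpfK]
    obtain ⟨ε, hε, hest⟩ := hEst
    refine ⟨ε, hε, ?_⟩
    intro x hx hxnorm hxne
    set t : ℝ := ‖x - xbar‖ with htdef
    have ht : 0 < t := norm_pos_iff.mpr (sub_ne_zero.mpr hxne)
    set p : Fin n → ℝ := t⁻¹ • (x - xbar) with hp
    have hpn : ‖p‖ = 1 := by
      rw [hp, norm_smul, Real.norm_eq_abs, abs_inv, abs_of_pos ht, ← htdef,
        inv_mul_cancel₀ ht.ne']
    have hxeq : x = xbar + t • p := by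
      rw [hp, smul_smul, mul_inv_cancel₀ ht.ne', one_smul]
      abel
    have hpD : p ∈ D := by
      intro i hi
      have : (A *ᵥ p) i = t⁻¹ * ((A *ᵥ x) i - (A *ᵥ xbar) i) := by
        simp [hp, Matrix.mulVec_smul, Matrix.mulVec_sub]
      rw [this]
      apply mul_nonpos_of_nonneg_of_nonpos (inv_nonneg.mpr ht.le)
      rw [hi]
      linarith [hx i]
    have := hest t p ht hxnorm hpn hpD
    rw [hxeq, phi_expand Q d hQ xbar p t]
    linarith
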